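/- Under the assumption that z·h(z) is nondecreasing, the function w(v) = ∫_0^v z·h(z) dz is convex, and for every v, T*(v)·H(v) ≥ w(b*(v)) + b*(v)·H(b*(v)) > b*(v)·H(b*(v)), where b*(v) maximizes (v−b)H(b) (so it satisfies the first-order condition h(b*)(v − b*) = H(b*)) and T*(v) satisfies H(v)(v − T*(v)) = ∫_0^v H(z)dz. In particular, the auctioneer's revenue from the tCPA format, T*(v)H(v), strictly exceeds the revenue from the mCPA format, b*(v)H(b*(v)). -/

import Mathlib

open Set intervalIntegral

theorem stmt5 (H : ℝ → ℝ) (v bstar Tstar : ℝ)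
    (hC1 : ContDiff ℝ 1 H) (hmono : StrictMonoOn H (Ici 0)) (hH0 : H 0 = 0)
    (hpos : ∀ z, 0 ≤ z → 0 < deriv H z)
    (hassump2 : MonotoneOn (fun z => z * deriv H z) (Ici 0))
    (hv : 0 < v) (hb : 0 < bstar) (hbv : bstar < v)
    (hFOC : deriv H bstar * (v - bstar) = H bstar)
    (hT : H v * (v - Tstar) = ∫ z in (0:ℝ)..v, H z) :
    ConvexOn ℝ (Ici 0) (fun t => ∫ z in (0:ℝ)..t, z * deriv H z) ∧
    (∫ z in (0:ℝ)..bstar, z * deriv H z) + bstar * H bstar ≤ Tstar * H v ∧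
    bstar * H bstar < (∫ z in (0:ℝ)..bstar, z * deriv H z) + bstar * H bstar ∧
    bstar * H bstar < Tstar * H v := by
  have hHc : Continuous H := hC1.continuous
  have hdc : Continuous (deriv H) := hC1.continuous_deriv le_rfl
  have hg : Continuous (fun z : ℝ => z * deriv H z) := continuous_id.mul hdc
  -- convexity
  have hconv : ConvexOn ℝ (Ici 0) (fun t => ∫ z in (0:ℝ)..t, z * deriv H z) := by
    apply MonotoneOn.convexOn_of_deriv (convex_Ici 0)
    · exact fun x _ => ((hg.integral_hasStrictDerivAt 0 x).hasDerivAt.differentiableAt).continuousAt.continuousWithinAt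
    · exact fun x _ => ((hg.integral_hasStrictDerivAt 0 x).hasDerivAt.differentiableAt).differentiableWithinAt
    · intro x hx y hy hxy
      rw [interior_Ici] at hx hy
      rw [Continuous.deriv_integral _ hg, Continuous.deriv_integral _ hg]
      exact hassump2 (show (0:ℝ) ≤ x from le_of_lt hx) (show (0:ℝ) ≤ y from le_of_lt hy) hxy
  refine ⟨hconv, ?_⟩
  -- integration by parts: ∫_0^v z h(z) = v H v - ∫_0^v H
  have hibp : (∫ z in (0:ℝ)..v, z * deriv H z) = v * H v - ∫ z in (0:ℝ)..v, H z := by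
    have := intervalIntegral.integral_mul_deriv_eq_deriv_mul
      (u := fun z : ℝ => z) (v := H) (u' := fun _ => (1:ℝ)) (v' := deriv H)
      (fun x _ => hasDerivAt_id x)
      (fun x _ => (hC1.differentiable one_ne_zero x).hasDerivAt)
      (intervalIntegrable_const)
      (hdc.intervalIntegrable 0 v)
    rw [this, hH0]
    simp
  have hw : Tstar * H v = ∫ z in (0:ℝ)..v, z * deriv H z := by
    rw [hibp]; ring_nf at hT ⊢; linarith
  have hsplit : (∫ z in (0:ℝ)..v, z * deriv H z)
      = (∫ z in (0:ℝ)..bstar, z * deriv H z) + ∫ z in bstar..v, z * deriv H z :=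
    (intervalIntegral.integral_add_adjacent_intervals (hg.intervalIntegrable _ _)
      (hg.intervalIntegrable _ _)).symm
  have hlow : bstar * H bstar ≤ ∫ z in bstar..v, z * deriv H z := by
    have h1 : bstar * H bstar = ∫ _ in bstar..v, bstar * deriv H bstar := by
      rw [intervalIntegral.integral_const, ← hFOC]; simp; ring
    rw [h1]
    refine intervalIntegral.integral_mono_on hbv.le intervalIntegrable_const
      (hg.intervalIntegrable _ _) (fun x hx => ?_)
    exact hassump2 hb.le (le_trans hb.le hx.1) hx.1
  have hwbpos : 0 < ∫ z in (0:ℝ)..bstar, z * deriv H z :=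
    intervalIntegral.intervalIntegral_pos_of_pos_on (hg.intervalIntegrable 0 bstar)
      (fun x hx => mul_pos hx.1 (hpos x hx.1.le)) hb
  refine ⟨?_, ?_, ?_⟩ <;> linarith
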